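/- arXiv:1501.00599 — 5 statements merged into one kernel-verified Lean document; each statement's English description precedes it below -/
import Mathlib

section
/- Let X and Y be nonnegative random variables with distribution functions F and G respectively, each with finite positive mean μ_F = E[X] and μ_G = E[Y]. Let X₁, X₂ be independent copies of X and Y₁, Y₂ independent copies of Y, and set μ_F^{(2)} = E[max{X₁,X₂}] and μ_G^{(2)} = E[max{Y₁,Y₂}]. If F ≤_* G (F is more IFRA than G), then μ_F^{(2)}/μ_F ≤ μ_G^{(2)}/μ_G. -/
open MeasureTheory ProbabilityTheory Set
open Filter Topology

/-- The right-continuous inverse of a (distribution) function `G`. -/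
noncomputable def rcInv (G : ℝ → ℝ) (u : ℝ) : ℝ := sInf {x : ℝ | u < G x}

/-- `F` is smaller than `G` in the star order (`F` is more IFRA than `G`):
`x ↦ G⁻¹(F(x))/x` is nondecreasing on `(0, ∞)`. -/
def StarOrder (F G : ℝ → ℝ) : Prop :=
  MonotoneOn (fun x => rcInv G (F x) / x) (Set.Ioi (0 : ℝ))


section rcInvLemmas

variable {G : ℝ → ℝ} {u x : ℝ}

lemma bddBelow_rcSet (hGsupp : ∀ y, 0 < G y → 0 ≤ y) (hu0 : 0 ≤ u) :
    BddBelow {x : ℝ | u < G x} :=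
  ⟨0, fun y hy => hGsupp y (lt_of_le_of_lt hu0 hy)⟩

lemma rcInv_le_of_lt (hGsupp : ∀ y, 0 < G y → 0 ≤ y) (hu0 : 0 ≤ u)
    (h : u < G x) : rcInv G u ≤ x :=
  csInf_le (bddBelow_rcSet hGsupp hu0) h

lemma le_of_rcInv_le (hG : Monotone G)
    (hGrc : ∀ x, ContinuousWithinAt G (Ici x) x)
    (hGtop : Tendsto G atTop (𝓝 1)) (hu1 : u < 1)
    (h : rcInv G u ≤ x) : u ≤ G x := by
  have hne : {x : ℝ | u < G x}.Nonempty := by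
    obtain ⟨y, hy⟩ := (hGtop.eventually_const_lt hu1).exists
    exact ⟨y, hy⟩
  have key : ∀ w, x < w → u ≤ G w := by
    intro w hw
    have : rcInv G u < w := lt_of_le_of_lt h hw
    obtain ⟨s, hs, hsw⟩ := exists_lt_of_csInf_lt hne this
    exact le_trans (le_of_lt hs) (hG hsw.le)
  have htend : Tendsto G (𝓝[>] x) (𝓝 (G x)) :=
    (hGrc x).mono_left (nhdsWithin_mono _ Ioi_subset_Ici_self)
  exact ge_of_tendsto htend (eventually_nhdsWithin_of_forall (fun w hw => key w hw))

end rcInvLemmas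

/-- Single-crossing property from the star order. -/
lemma crossing_of_star {F G : ℝ → ℝ} (hF : Monotone F) (hF0 : ∀ x, 0 ≤ F x)
    (hF1 : ∀ x, F x ≤ 1)
    (hG : Monotone G) (hG1 : ∀ x, G x ≤ 1)
    (hGrc : ∀ x, ContinuousWithinAt G (Ici x) x)
    (hGtop : Tendsto G atTop (𝓝 1)) (hGsupp : ∀ y, 0 < G y → 0 ≤ y)
    (hstar : StarOrder F G) {c : ℝ} (hc : 0 < c) {z y : ℝ}
    (hz : 0 < z) (hzy : z < y) (hcz : G (c * z) < F z) : G (c * y) ≤ F y := by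
  by_cases hFz1 : F z = 1
  · calc G (c * y) ≤ 1 := hG1 _
      _ = F z := hFz1.symm
      _ ≤ F y := hF hzy.le
  · have hFz : F z < 1 := lt_of_le_of_ne (hF1 z) hFz1
    have h1 : c * z < rcInv G (F z) := by
      by_contra h
      push_neg at h
      exact absurd (le_of_rcInv_le hG hGrc hGtop hFz h) (not_le.mpr hcz)
    have hy0 : 0 < y := hz.trans hzy
    have hratio : c < rcInv G (F z) / z := by
      rw [lt_div_iff₀ hz]
      linarith
    have hmono := hstar (mem_Ioi.mpr hz) (mem_Ioi.mpr hy0) hzy.le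
    have h2 : c * y < rcInv G (F y) := by
      have : c < rcInv G (F y) / y := lt_of_lt_of_le hratio hmono
      rw [lt_div_iff₀ hy0] at this
      linarith
    by_contra hcon
    push_neg at hcon
    exact absurd (rcInv_le_of_lt hGsupp (hF0 y) hcon) (not_le.mpr h2)


/-- Integrability of the tail-measure function, companion to the layer cake formula. -/
lemma integrableOn_meas_lt {α : Type*} [MeasurableSpace α] {μ : Measure α} {f : α → ℝ}
    (f_intble : Integrable f μ) (f_nn : 0 ≤ᵐ[μ] f) :
    IntegrableOn (fun t => (μ {a | t < f a}).toReal) (Ioi (0 : ℝ)) := by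
  have hmeas : Measurable fun t : ℝ => μ {a | t < f a} :=
    Antitone.measurable fun _ _ hst => measure_mono fun _ h => lt_of_le_of_lt hst h
  refine ⟨hmeas.ennreal_toReal.aestronglyMeasurable, ?_⟩
  have key := lintegral_eq_lintegral_meas_lt μ f_nn f_intble.aemeasurable
  have fin : ∫⁻ t in Ioi (0:ℝ), μ {a | t < f a} < ⊤ := by
    rw [← key]; exact f_intble.lintegral_lt_top
  refine lt_of_le_of_lt (lintegral_mono fun t => ?_) fin
  simp only
  rw [Real.enorm_eq_ofReal ENNReal.toReal_nonneg]
  exact ENNReal.ofReal_toReal_le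

/-- Core integral comparison: equal "means", single crossing implies comparison of
the second-order integrals. -/
lemma core_compare {F H : ℝ → ℝ} (hFm : Monotone F) (hHm : Monotone H)
    (hF0 : ∀ x, 0 ≤ F x) (hF1 : ∀ x, F x ≤ 1) (hH0 : ∀ x, 0 ≤ H x) (hH1 : ∀ x, H x ≤ 1)
    (hcross : ∀ z y, 0 < z → z < y → H z < F z → H y ≤ F y)
    (hFint : IntegrableOn (fun t => 1 - F t) (Ioi 0))
    (hHint : IntegrableOn (fun t => 1 - H t) (Ioi 0))
    (hF2int : IntegrableOn (fun t => 1 - F t ^ 2) (Ioi 0))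
    (hH2int : IntegrableOn (fun t => 1 - H t ^ 2) (Ioi 0))
    (hmean : ∫ t in Ioi (0:ℝ), (1 - F t) = ∫ t in Ioi (0:ℝ), (1 - H t)) :
    ∫ t in Ioi (0:ℝ), (1 - F t ^ 2) ≤ ∫ t in Ioi (0:ℝ), (1 - H t ^ 2) := by
  have hDint : IntegrableOn (fun t => F t - H t) (Ioi 0) :=
    (hHint.sub hFint).congr (Filter.Eventually.of_forall fun t => by
      simp only [Pi.sub_apply]; ring)
  have hD2int : IntegrableOn (fun t => F t ^ 2 - H t ^ 2) (Ioi 0) :=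
    (hH2int.sub hF2int).congr (Filter.Eventually.of_forall fun t => by
      simp only [Pi.sub_apply]; ring)
  have hsub1 : (∫ t in Ioi (0:ℝ), ((1 - H t) - (1 - F t))) = ∫ t in Ioi (0:ℝ), (F t - H t) :=
    integral_congr_ae (Filter.Eventually.of_forall fun t => by ring)
  have hDmean : ∫ t in Ioi (0:ℝ), (F t - H t) = 0 := by
    have h1 := integral_sub hHint hFint
    rw [hsub1] at h1
    rw [h1, hmean, sub_self]
  set S : Set ℝ := {x | 0 < x ∧ H x < F x} with hS
  set c : ℝ := sInf ((fun x => F x + H x) '' S ∪ {2}) with hc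
  have hbdd : BddBelow ((fun x => F x + H x) '' S ∪ {2}) := by
    refine ⟨0, fun b hb => ?_⟩
    rcases hb with ⟨x, _, rfl⟩ | hb
    · exact add_nonneg (hF0 x) (hH0 x)
    · simp only [mem_singleton_iff] at hb; rw [hb]; norm_num
  have claim : ∀ x ∈ Ioi (0:ℝ), 0 ≤ (F x - H x) * ((F x + H x) - c) := by
    intro x hx
    rcases lt_trichotomy (H x) (F x) with h | h | h
    · have hxS : x ∈ S := ⟨hx, h⟩
      have : c ≤ F x + H x := csInf_le hbdd (Or.inl ⟨x, hxS, rfl⟩)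
      exact mul_nonneg (by linarith) (by linarith)
    · rw [h]; simp
    · have : F x + H x ≤ c := by
        apply le_csInf ⟨2, by simp⟩
        rintro b (⟨s, hsS, rfl⟩ | hb)
        · have hxs : x ≤ s := by
            by_contra hcon
            push_neg at hcon
            exact absurd (hcross s x hsS.1 hcon hsS.2) (not_le.mpr h)
          exact add_le_add (hFm hxs) (hHm hxs)
        · simp only [mem_singleton_iff] at hb; rw [hb]; linarith [hF1 x, hH1 x]
      nlinarith
  have key : 0 ≤ ∫ t in Ioi (0:ℝ), (F t - H t) * ((F t + H t) - c) :=
    setIntegral_nonneg measurableSet_Ioi claim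
  have expand : ∫ t in Ioi (0:ℝ), (F t - H t) * ((F t + H t) - c)
      = (∫ t in Ioi (0:ℝ), (F t ^ 2 - H t ^ 2)) - c * ∫ t in Ioi (0:ℝ), (F t - H t) := by
    rw [← integral_const_mul, ← integral_sub hD2int (hDint.const_mul c)]
    apply setIntegral_congr_fun measurableSet_Ioi
    intro t _
    ring
  rw [expand, hDmean, mul_zero, sub_zero] at key
  have h3 := integral_sub hH2int hF2int
  have h4 : (∫ t in Ioi (0:ℝ), ((1 - H t ^ 2) - (1 - F t ^ 2)))
      = ∫ t in Ioi (0:ℝ), (F t ^ 2 - H t ^ 2) :=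
    integral_congr_ae (Filter.Eventually.of_forall fun t => by ring)
  rw [h4] at h3
  linarith



lemma side_facts {Ω : Type*} [MeasureSpace Ω] [IsProbabilityMeasure (ℙ : Measure Ω)]
    (X X₁ X₂ : Ω → ℝ) (hXm : Measurable X) (hX1m : Measurable X₁) (hX2m : Measurable X₂)
    (hXpos : ∀ ω, 0 ≤ X ω) (hXint : Integrable X ℙ)
    (hX1d : Measure.map X₁ ℙ = Measure.map X ℙ) (hX2d : Measure.map X₂ ℙ = Measure.map X ℙ)
    (hXindep : IndepFun X₁ X₂ ℙ) :
    (∫ ω, X ω) = (∫ t in Ioi (0:ℝ), (1 - cdf (Measure.map X ℙ) t)) ∧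
    (∫ ω, max (X₁ ω) (X₂ ω)) = (∫ t in Ioi (0:ℝ), (1 - (cdf (Measure.map X ℙ) t) ^ 2)) ∧
    IntegrableOn (fun t => 1 - cdf (Measure.map X ℙ) t) (Ioi 0) ∧
    IntegrableOn (fun t => 1 - (cdf (Measure.map X ℙ) t) ^ 2) (Ioi 0) := by
  haveI : IsProbabilityMeasure (Measure.map X ℙ) := Measure.isProbabilityMeasure_map hXm.aemeasurable
  have hcdf : ∀ t, cdf (Measure.map X ℙ) t = (ℙ (X ⁻¹' Iic t)).toReal := fun t => by
    rw [cdf_eq_real, measureReal_def, Measure.map_apply hXm measurableSet_Iic]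
  have tailX : ∀ t : ℝ, (ℙ {ω | t < X ω}).toReal = 1 - cdf (Measure.map X ℙ) t := by
    intro t
    have hset : {ω | t < X ω} = (X ⁻¹' Iic t)ᶜ := by
      ext ω; simp [not_le]
    rw [hset, prob_compl_eq_one_sub (hXm measurableSet_Iic),
      ENNReal.toReal_sub_of_le prob_le_one ENNReal.one_ne_top, ENNReal.toReal_one, hcdf]
  -- integrability and a.e. nonnegativity for the copies
  have hidX : Integrable id (Measure.map X ℙ) :=
    (integrable_map_measure aestronglyMeasurable_id hXm.aemeasurable).mpr hXint
  have hX1int : Integrable X₁ ℙ :=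
    (integrable_map_measure aestronglyMeasurable_id hX1m.aemeasurable).mp (hX1d ▸ hidX)
  have hX2int : Integrable X₂ ℙ :=
    (integrable_map_measure aestronglyMeasurable_id hX2m.aemeasurable).mp (hX2d ▸ hidX)
  have hpre : ℙ (X ⁻¹' Iio 0) = 0 := by
    have : X ⁻¹' Iio 0 = ∅ :=
      eq_empty_iff_forall_notMem.mpr fun ω h => absurd h (not_lt.mpr (hXpos ω))
    rw [this, measure_empty]
  have hnn : ∀ (Z : Ω → ℝ), Measurable Z → Measure.map Z ℙ = Measure.map X ℙ →
      0 ≤ᵐ[ℙ] Z := by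
    intro Z hZm hZd
    rw [Filter.EventuallyLE, ae_iff]
    have h1 : {ω | ¬ (0:Ω→ℝ) ω ≤ Z ω} = Z ⁻¹' Iio 0 := by
      ext ω; simp [not_le]
    rw [h1, ← Measure.map_apply hZm measurableSet_Iio, hZd,
      Measure.map_apply hXm measurableSet_Iio, hpre]
  have hX1nn := hnn X₁ hX1m hX1d
  have hX2nn := hnn X₂ hX2m hX2d
  have hmax_int : Integrable (fun ω => max (X₁ ω) (X₂ ω)) ℙ := by
    have := hX1int.sup hX2int
    exact this.congr (Filter.Eventually.of_forall fun ω => rfl)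
  have hmax_nn : 0 ≤ᵐ[ℙ] fun ω => max (X₁ ω) (X₂ ω) := by
    filter_upwards [hX1nn] with ω h
    exact le_trans h (le_max_left _ _)
  have tailmax : ∀ t : ℝ,
      (ℙ {ω | t < max (X₁ ω) (X₂ ω)}).toReal = 1 - (cdf (Measure.map X ℙ) t) ^ 2 := by
    intro t
    have hset : {ω | t < max (X₁ ω) (X₂ ω)} = (X₁ ⁻¹' Iic t ∩ X₂ ⁻¹' Iic t)ᶜ := by
      ext ω
      simp only [mem_setOf_eq, mem_compl_iff, mem_inter_iff, mem_preimage, mem_Iic,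
        lt_max_iff, not_and_or, not_le]
    have e1 : ℙ (X₁ ⁻¹' Iic t) = (Measure.map X ℙ) (Iic t) := by
      rw [← hX1d, Measure.map_apply hX1m measurableSet_Iic]
    have e2 : ℙ (X₂ ⁻¹' Iic t) = (Measure.map X ℙ) (Iic t) := by
      rw [← hX2d, Measure.map_apply hX2m measurableSet_Iic]
    have hle : (Measure.map X ℙ) (Iic t) * (Measure.map X ℙ) (Iic t) ≤ 1 := by
      calc (Measure.map X ℙ) (Iic t) * (Measure.map X ℙ) (Iic t)
          ≤ 1 * 1 := mul_le_mul' prob_le_one prob_le_one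
        _ = 1 := one_mul 1
    rw [hset, prob_compl_eq_one_sub ((hX1m measurableSet_Iic).inter (hX2m measurableSet_Iic)),
      hXindep.measure_inter_preimage_eq_mul _ _ measurableSet_Iic measurableSet_Iic,
      e1, e2, ENNReal.toReal_sub_of_le hle ENNReal.one_ne_top, ENNReal.toReal_one,
      ENNReal.toReal_mul, cdf_eq_real, measureReal_def]
    ring
  refine ⟨?_, ?_, ?_, ?_⟩
  · rw [hXint.integral_eq_integral_meas_lt (ae_of_all _ hXpos)]
    exact setIntegral_congr_fun measurableSet_Ioi fun t _ => tailX t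
  · rw [hmax_int.integral_eq_integral_meas_lt hmax_nn]
    exact setIntegral_congr_fun measurableSet_Ioi fun t _ => tailmax t
  · exact (integrableOn_meas_lt hXint (ae_of_all _ hXpos)).congr
      (Filter.Eventually.of_forall fun t => tailX t)
  · exact (integrableOn_meas_lt hmax_int hmax_nn).congr
      (Filter.Eventually.of_forall fun t => tailmax t)


/-- If `F ≤_* G` then `E[max{X₁,X₂}]/E[X] ≤ E[max{Y₁,Y₂}]/E[Y]`. -/
theorem stmt0 {Ω : Type*} [MeasureSpace Ω] [IsProbabilityMeasure (ℙ : Measure Ω)]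
    (X Y X₁ X₂ Y₁ Y₂ : Ω → ℝ)
    (hXm : Measurable X) (hYm : Measurable Y)
    (hX1m : Measurable X₁) (hX2m : Measurable X₂)
    (hY1m : Measurable Y₁) (hY2m : Measurable Y₂)
    (hXpos : ∀ ω, 0 ≤ X ω) (hYpos : ∀ ω, 0 ≤ Y ω)
    (hXint : Integrable X ℙ) (hYint : Integrable Y ℙ)
    (hμF : 0 < ∫ ω, X ω) (hμG : 0 < ∫ ω, Y ω)
    (hX1d : Measure.map X₁ ℙ = Measure.map X ℙ) (hX2d : Measure.map X₂ ℙ = Measure.map X ℙ)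
    (hY1d : Measure.map Y₁ ℙ = Measure.map Y ℙ) (hY2d : Measure.map Y₂ ℙ = Measure.map Y ℙ)
    (hXindep : IndepFun X₁ X₂ ℙ) (hYindep : IndepFun Y₁ Y₂ ℙ)
    (hstar : StarOrder (fun x => cdf (Measure.map X ℙ) x) (fun x => cdf (Measure.map Y ℙ) x)) :
    (∫ ω, max (X₁ ω) (X₂ ω)) / (∫ ω, X ω) ≤ (∫ ω, max (Y₁ ω) (Y₂ ω)) / (∫ ω, Y ω) := by
  obtain ⟨hEX, hEmaxX, hIX, hI2X⟩ :=
    side_facts X X₁ X₂ hXm hX1m hX2m hXpos hXint hX1d hX2d hXindep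
  obtain ⟨hEY, hEmaxY, hIY, hI2Y⟩ :=
    side_facts Y Y₁ Y₂ hYm hY1m hY2m hYpos hYint hY1d hY2d hYindep
  haveI : IsProbabilityMeasure (Measure.map X ℙ) := Measure.isProbabilityMeasure_map hXm.aemeasurable
  haveI : IsProbabilityMeasure (Measure.map Y ℙ) := Measure.isProbabilityMeasure_map hYm.aemeasurable
  set c : ℝ := (∫ ω, Y ω) / (∫ ω, X ω) with hcdef
  have hc : 0 < c := div_pos hμG hμF
  -- basic cdf properties
  have hFm : Monotone (fun x => cdf (Measure.map X ℙ) x) := fun a b h => (cdf _).mono h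
  have hGm : Monotone (fun x => cdf (Measure.map Y ℙ) x) := fun a b h => (cdf _).mono h
  have hF0 : ∀ x, 0 ≤ cdf (Measure.map X ℙ) x := fun x => cdf_nonneg _ x
  have hF1 : ∀ x, cdf (Measure.map X ℙ) x ≤ 1 := fun x => cdf_le_one _ x
  have hG0 : ∀ x, 0 ≤ cdf (Measure.map Y ℙ) x := fun x => cdf_nonneg _ x
  have hG1 : ∀ x, cdf (Measure.map Y ℙ) x ≤ 1 := fun x => cdf_le_one _ x
  have hHm : Monotone (fun t => cdf (Measure.map Y ℙ) (c * t)) :=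
    fun a b h => (cdf _).mono (mul_le_mul_of_nonneg_left h hc.le)
  have hGrc : ∀ x, ContinuousWithinAt (fun x => cdf (Measure.map Y ℙ) x) (Ici x) x :=
    (cdf _).right_continuous
  have hGtop : Filter.Tendsto (fun x => cdf (Measure.map Y ℙ) x) Filter.atTop (𝓝 1) :=
    tendsto_cdf_atTop _
  have hGsupp : ∀ y, 0 < cdf (Measure.map Y ℙ) y → 0 ≤ y := by
    intro y hy
    by_contra h
    push_neg at h
    have hzero : cdf (Measure.map Y ℙ) y = 0 := by
      rw [cdf_eq_real, measureReal_def, Measure.map_apply hYm measurableSet_Iic]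
      have hempty : Y ⁻¹' Iic y = ∅ := eq_empty_iff_forall_notMem.mpr fun ω hw =>
        absurd (le_trans (hYpos ω) hw) (not_le.mpr h)
      rw [hempty, measure_empty, ENNReal.toReal_zero]
    linarith
  have hcross : ∀ z y, 0 < z → z < y →
      cdf (Measure.map Y ℙ) (c * z) < cdf (Measure.map X ℙ) z →
      cdf (Measure.map Y ℙ) (c * y) ≤ cdf (Measure.map X ℙ) y :=
    fun z y hz hzy hlt =>
      crossing_of_star hFm hF0 hF1 hGm hG1 hGrc hGtop hGsupp hstar hc hz hzy hlt
  -- scaled integrability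
  have hHint : IntegrableOn (fun t => 1 - cdf (Measure.map Y ℙ) (c * t)) (Ioi 0) := by
    have h := (integrableOn_Ioi_comp_mul_left_iff
      (fun s => 1 - cdf (Measure.map Y ℙ) s) 0 hc).mpr
    rw [mul_zero] at h
    exact h hIY
  have hH2int : IntegrableOn (fun t => 1 - (cdf (Measure.map Y ℙ) (c * t)) ^ 2) (Ioi 0) := by
    have h := (integrableOn_Ioi_comp_mul_left_iff
      (fun s => 1 - (cdf (Measure.map Y ℙ) s) ^ 2) 0 hc).mpr
    rw [mul_zero] at h
    exact h hI2Y
  -- scaled integrals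
  have hscale1 := integral_comp_mul_left_Ioi (fun s => 1 - cdf (Measure.map Y ℙ) s) 0 hc
  rw [mul_zero] at hscale1
  have hscale2 := integral_comp_mul_left_Ioi
    (fun s => 1 - (cdf (Measure.map Y ℙ) s) ^ 2) 0 hc
  rw [mul_zero] at hscale2
  have hmean : ∫ t in Ioi (0:ℝ), (1 - cdf (Measure.map X ℙ) t)
      = ∫ t in Ioi (0:ℝ), (1 - cdf (Measure.map Y ℙ) (c * t)) := by
    rw [← hEX, hscale1, ← hEY, smul_eq_mul, hcdef]
    field_simp
  have hcore := core_compare hFm hHm hF0 hF1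
    (fun x => hG0 (c * x)) (fun x => hG1 (c * x)) hcross hIX hHint hI2X hH2int hmean
  -- conclude
  have hfinal : (∫ ω, max (X₁ ω) (X₂ ω)) ≤ c⁻¹ * ∫ ω, max (Y₁ ω) (Y₂ ω) := by
    rw [hEmaxX, hEmaxY]
    calc ∫ t in Ioi (0:ℝ), (1 - (cdf (Measure.map X ℙ) t) ^ 2) ≤
        ∫ t in Ioi (0:ℝ), (1 - (cdf (Measure.map Y ℙ) (c * t)) ^ 2) := hcore
      _ = c⁻¹ * ∫ t in Ioi (0:ℝ), (1 - (cdf (Measure.map Y ℙ) t) ^ 2) := by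
        rw [hscale2, smul_eq_mul]
  have h5 : c⁻¹ * (∫ ω, max (Y₁ ω) (Y₂ ω)) * (∫ ω, Y ω)
      = (∫ ω, max (Y₁ ω) (Y₂ ω)) * (∫ ω, X ω) := by
    rw [hcdef]
    field_simp
  have h6 := mul_le_mul_of_nonneg_right hfinal hμG.le
  rw [div_le_div_iff₀ hμF hμG]
  linarith
end

section
/- Let F and G be continuous, strictly increasing distribution functions of positive random variables. If F ≤_* G and G ≤_* F, then there exists a constant a > 0 such that F(x) = G(ax) for all x ≥ 0. -/
open MeasureTheory ProbabilityTheory Set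

open Filter Topology in
lemma rcInv_spec (G : ℝ → ℝ) (hGcont : Continuous G) (hGmono : Monotone G)
    (hG0 : G 0 = 0) (hGtop : Filter.Tendsto G Filter.atTop (nhds 1))
    {u : ℝ} (hu0 : 0 < u) (hu1 : u < 1) :
    0 < rcInv G u ∧ G (rcInv G u) = u := by
  set S : Set ℝ := {x : ℝ | u < G x} with hS
  have hne : S.Nonempty := (hGtop.eventually (eventually_gt_nhds hu1)).exists
  have hbd : BddBelow S := by
    refine ⟨0, fun x hx => ?_⟩
    by_contra h
    push_neg at h
    have : G x ≤ 0 := hG0 ▸ hGmono h.le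
    exact absurd hx (by simp [hS]; linarith)
  set y := sInf S with hy
  have hopen : IsOpen S := isOpen_lt continuous_const hGcont
  -- G y ≤ u
  have h1 : G y ≤ u := by
    by_contra h
    push_neg at h
    obtain ⟨ε, hε, hball⟩ := Metric.isOpen_iff.mp hopen y h
    have : y - ε / 2 ∈ S := hball (by
      rw [Metric.mem_ball, Real.dist_eq, show y - ε / 2 - y = -(ε/2) by ring, abs_neg,
        abs_of_nonneg (by linarith)]
      linarith)
    have := csInf_le hbd this
    linarith
  -- u ≤ G y
  have h2 : u ≤ G y := by
    by_contra h
    push_neg at h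
    have hopen2 : IsOpen {x : ℝ | G x < u} := isOpen_lt hGcont continuous_const
    obtain ⟨ε, hε, hball⟩ := Metric.isOpen_iff.mp hopen2 y h
    have hlb : ∀ x ∈ S, y + ε / 2 ≤ x := by
      intro x hx
      by_contra hc
      push_neg at hc
      have hyx : y ≤ x := csInf_le hbd hx
      have h3 : x ∈ {x : ℝ | G x < u} := hball (by
        rw [Metric.mem_ball, Real.dist_eq, abs_of_nonneg (by linarith)]
        linarith)
      have h4 : G x < u := h3
      have h5 : u < G x := hx
      linarith
    have := le_csInf hne hlb
    linarith
  have hGy : G y = u := le_antisymm h1 h2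
  refine ⟨?_, hGy⟩
  by_contra h
  push_neg at h
  have : G y ≤ 0 := hG0 ▸ hGmono h
  linarith

/-- If `F` and `G` are continuous strictly increasing distribution functions of positive
random variables and both `F ≤_* G` and `G ≤_* F`, then `F(x) = G(ax)` for all `x ≥ 0`
and some `a > 0`. -/
theorem stmt2 {Ω : Type*} [MeasureSpace Ω] [IsProbabilityMeasure (ℙ : Measure Ω)]
    (X Y : Ω → ℝ) (hXm : Measurable X) (hYm : Measurable Y)
    (hXpos : ∀ ω, 0 < X ω) (hYpos : ∀ ω, 0 < Y ω)
    (F G : ℝ → ℝ)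
    (hF : F = fun x => cdf (Measure.map X ℙ) x)
    (hG : G = fun x => cdf (Measure.map Y ℙ) x)
    (hFcont : Continuous F) (hGcont : Continuous G)
    (hFmono : StrictMonoOn F (Set.Ici (0 : ℝ))) (hGmono : StrictMonoOn G (Set.Ici (0 : ℝ)))
    (hFG : StarOrder F G) (hGF : StarOrder G F) :
    ∃ a : ℝ, 0 < a ∧ ∀ x : ℝ, 0 ≤ x → F x = G (a * x) := by
  have hXprob : IsProbabilityMeasure (Measure.map X ℙ) := Measure.isProbabilityMeasure_map hXm.aemeasurable
  have hYprob : IsProbabilityMeasure (Measure.map Y ℙ) := Measure.isProbabilityMeasure_map hYm.aemeasurable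
  -- value at 0
  have hF0 : F 0 = 0 := by
    rw [hF]
    simp only
    rw [cdf_eq_real, measureReal_def]
    rw [Measure.map_apply hXm measurableSet_Iic]
    have : X ⁻¹' Iic 0 = ∅ := by
      ext ω; simp [not_le.mpr (hXpos ω)]
    simp [this]
  have hG0 : G 0 = 0 := by
    rw [hG]
    simp only
    rw [cdf_eq_real, measureReal_def]
    rw [Measure.map_apply hYm measurableSet_Iic]
    have : Y ⁻¹' Iic 0 = ∅ := by
      ext ω; simp [not_le.mpr (hYpos ω)]
    simp [this]
  have hFmono' : Monotone F := by rw [hF]; exact monotone_cdf _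
  have hGmono' : Monotone G := by rw [hG]; exact monotone_cdf _
  have hFtop : Filter.Tendsto F Filter.atTop (nhds 1) := by rw [hF]; exact tendsto_cdf_atTop _
  have hGtop : Filter.Tendsto G Filter.atTop (nhds 1) := by rw [hG]; exact tendsto_cdf_atTop _
  have hFlt1 : ∀ x : ℝ, 0 ≤ x → F x < 1 := fun x hx =>
    lt_of_lt_of_le (hFmono hx (by simp only [mem_Ici]; linarith : x + 1 ∈ Ici (0:ℝ)) (by linarith)) (by rw [hF]; exact cdf_le_one _ _)
  have hGlt1 : ∀ x : ℝ, 0 ≤ x → G x < 1 := fun x hx =>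
    lt_of_lt_of_le (hGmono hx (by simp only [mem_Ici]; linarith : x + 1 ∈ Ici (0:ℝ)) (by linarith)) (by rw [hG]; exact cdf_le_one _ _)
  have hFpos : ∀ x : ℝ, 0 < x → 0 < F x := fun x hx => hF0 ▸ hFmono (mem_Ici.mpr le_rfl) hx.le hx
  have hGpos : ∀ x : ℝ, 0 < x → 0 < G x := fun x hx => hG0 ▸ hGmono (mem_Ici.mpr le_rfl) hx.le hx
  set φ : ℝ → ℝ := fun x => rcInv G (F x) with hφ
  set ψ : ℝ → ℝ := fun x => rcInv F (G x) with hψ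
  have hφspec : ∀ x : ℝ, 0 < x → 0 < φ x ∧ G (φ x) = F x := fun x hx =>
    rcInv_spec G hGcont hGmono' hG0 hGtop (hFpos x hx) (hFlt1 x hx.le)
  have hψspec : ∀ x : ℝ, 0 < x → 0 < ψ x ∧ F (ψ x) = G x := fun x hx =>
    rcInv_spec F hFcont hFmono' hF0 hFtop (hGpos x hx) (hGlt1 x hx.le)
  -- ψ ∘ φ = id on positives
  have hψφ : ∀ x : ℝ, 0 < x → ψ (φ x) = x := by
    intro x hx
    obtain ⟨hφpos, hGφ⟩ := hφspec x hx
    obtain ⟨hψpos, hFψ⟩ := hψspec (φ x) hφpos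
    have : F (ψ (φ x)) = F x := by rw [hFψ, hGφ]
    exact hFmono.injOn hψpos.le hx.le this
  -- h is constant
  have key : ∀ x : ℝ, 0 < x → ∀ z : ℝ, 0 < z → x ≤ z → φ x / x = φ z / z := by
    intro x hx z hz hxz
    have h1 : φ x / x ≤ φ z / z := hFG hx hz hxz
    have hφx := (hφspec x hx).1
    have hφz := (hφspec z hz).1
    have hφle : φ x ≤ φ z := by
      have h1' := h1
      rw [div_le_div_iff₀ hx hz] at h1'
      nlinarith
    have h2 : ψ (φ x) / φ x ≤ ψ (φ z) / φ z := hGF hφx hφz hφle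
    rw [hψφ x hx, hψφ z hz] at h2
    -- h2 : x / φ x ≤ z / φ z
    rw [div_le_div_iff₀ hφx hφz] at h2
    rw [div_le_div_iff₀ hx hz] at h1
    rw [div_eq_div_iff hx.ne' hz.ne']
    linarith
  set a := φ 1 with ha
  have hapos : 0 < a := (hφspec 1 one_pos).1
  refine ⟨a, hapos, fun x hx => ?_⟩
  rcases eq_or_lt_of_le hx with h | h
  · rw [← h]; simp [hF0, hG0]
  · have hphix : φ x = a * x := by
      rcases le_total x 1 with hc | hc
      · have := key x h 1 one_pos hc
        field_simp at this
        linarith [this]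
      · have := key 1 one_pos x h hc
        field_simp at this
        linarith [this]
    rw [← hphix]
    exact ((hφspec x h).2).symm
end

section
/- Let X be an exponential random variable with rate λ > 0, distribution function E_λ(x) = 1 − exp(−λx), and mean μ = 1/λ. Then (4/μ²)·Var(X·E_λ(X) + ∫_X^∞ t dE_λ(t) − (3/4)·X) = 1/12; that is, the asymptotic variance σ²_{E_λ} of the test statistic under exponentiality equals 1/12. -/
open MeasureTheory ProbabilityTheory Set Filter Real


-- exp(-(a*t)) tends to 0
lemma tendA {a : ℝ} (ha : 0 < a) : Tendsto (fun t : ℝ => Real.exp (-(a*t))) atTop (nhds 0) :=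
  Real.tendsto_exp_neg_atTop_nhds_zero.comp (tendsto_id.const_mul_atTop ha)

lemma tendB {a : ℝ} (ha : 0 < a) (n : ℕ) :
    Tendsto (fun t : ℝ => (a*t)^n * Real.exp (-(a*t))) atTop (nhds 0) :=
  (Real.tendsto_pow_mul_exp_neg_atTop_nhds_zero n).comp (tendsto_id.const_mul_atTop ha)

-- derivative of exp(-(a*t))
lemma derivE (a t : ℝ) : HasDerivAt (fun t => Real.exp (-(a*t))) (-a * Real.exp (-(a*t))) t := by
  have h : HasDerivAt (fun t : ℝ => -(a*t)) (-a) t := by simpa using ((hasDerivAt_id t).const_mul a).fun_neg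
  simpa [mul_comm] using h.exp

lemma I0 {a : ℝ} (ha : 0 < a) :
    IntegrableOn (fun t : ℝ => Real.exp (-(a*t))) (Ioi 0) ∧
    ∫ t in Ioi (0:ℝ), Real.exp (-(a*t)) = 1/a := by
  have hderiv : ∀ x ∈ Ici (0:ℝ), HasDerivAt (fun t => -(1/a * Real.exp (-(a*t))))
      (Real.exp (-(a*x))) x := by
    intro x _
    have := ((derivE a x).const_mul (1/a)).fun_neg
    refine this.congr_deriv ?_
    field_simp
  have hpos : ∀ x ∈ Ioi (0:ℝ), 0 ≤ Real.exp (-(a*x)) := fun x _ => (Real.exp_pos _).le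
  have htend : Tendsto (fun t : ℝ => -(1/a * Real.exp (-(a*t)))) atTop (nhds 0) := by
    have := ((tendA ha).const_mul (1/a)).neg
    simpa using this
  constructor
  · exact integrableOn_Ioi_deriv_of_nonneg' hderiv hpos htend
  · have := integral_Ioi_of_hasDerivAt_of_nonneg' hderiv hpos htend
    simp at this
    rw [this]; field_simp

lemma I1 {a : ℝ} (ha : 0 < a) {c : ℝ} (hc : 0 ≤ c) :
    IntegrableOn (fun t : ℝ => t * Real.exp (-(a*t))) (Ioi c) ∧
    ∫ t in Ioi c, t * Real.exp (-(a*t)) = (c/a + 1/a^2) * Real.exp (-(a*c)) := by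
  have hderiv : ∀ x ∈ Ici c, HasDerivAt (fun t => -((t/a + 1/a^2) * Real.exp (-(a*t))))
      (x * Real.exp (-(a*x))) x := by
    intro x _
    have h1 : HasDerivAt (fun t : ℝ => t/a + 1/a^2) (1/a) x :=
      ((hasDerivAt_id x).div_const a).add_const (1/a^2)
    have := (h1.mul (derivE a x)).fun_neg
    refine this.congr_deriv ?_
    field_simp
    ring
  have hpos : ∀ x ∈ Ioi c, 0 ≤ x * Real.exp (-(a*x)) := fun x hx =>
    mul_nonneg (hc.trans (le_of_lt hx)) (Real.exp_pos _).le
  have htend : Tendsto (fun t : ℝ => -((t/a + 1/a^2) * Real.exp (-(a*t)))) atTop (nhds 0) := by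
    have h := (((tendB ha 1).const_mul (1/a^2)).add ((tendA ha).const_mul (1/a^2))).neg
    simp only [mul_zero, add_zero, neg_zero] at h
    apply h.congr
    intro t
    field_simp
  refine ⟨integrableOn_Ioi_deriv_of_nonneg' hderiv hpos htend, ?_⟩
  have := integral_Ioi_of_hasDerivAt_of_nonneg' hderiv hpos htend
  rw [this]; ring

lemma I2 {a : ℝ} (ha : 0 < a) :
    IntegrableOn (fun t : ℝ => t^2 * Real.exp (-(a*t))) (Ioi 0) ∧
    ∫ t in Ioi (0:ℝ), t^2 * Real.exp (-(a*t)) = 2/a^3 := by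
  have hderiv : ∀ x ∈ Ici (0:ℝ),
      HasDerivAt (fun t => -((t^2/a + 2*t/a^2 + 2/a^3) * Real.exp (-(a*t))))
      (x^2 * Real.exp (-(a*x))) x := by
    intro x _
    have h1 : HasDerivAt (fun t : ℝ => t^2/a + 2*t/a^2 + 2/a^3) (2*x/a + 2/a^2) x := by
      have hp : HasDerivAt (fun t : ℝ => t^2) (2*x) x := by
        simpa using hasDerivAt_pow 2 x
      simpa [add_div] using ((hp.div_const a).add (((hasDerivAt_id x).const_mul 2).div_const
        (a^2))).add_const (2/a^3)
    have := (h1.mul (derivE a x)).fun_neg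
    refine this.congr_deriv ?_
    field_simp
    ring
  have hpos : ∀ x ∈ Ioi (0:ℝ), 0 ≤ x^2 * Real.exp (-(a*x)) := fun x _ =>
    mul_nonneg (sq_nonneg x) (Real.exp_pos _).le
  have htend : Tendsto (fun t : ℝ => -((t^2/a + 2*t/a^2 + 2/a^3) * Real.exp (-(a*t))))
      atTop (nhds 0) := by
    have h := ((((tendB ha 2).const_mul (1/a^3)).add ((tendB ha 1).const_mul (2/a^3))).add
      ((tendA ha).const_mul (2/a^3))).neg
    simp only [mul_zero, add_zero, neg_zero] at h
    apply h.congr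
    intro t
    field_simp
  refine ⟨integrableOn_Ioi_deriv_of_nonneg' hderiv hpos htend, ?_⟩
  have := integral_Ioi_of_hasDerivAt_of_nonneg' hderiv hpos htend
  rw [this]
  norm_num

lemma epdfReal_eq (l x : ℝ) :
    exponentialPDFReal l x = if 0 ≤ x then l * Real.exp (-(l*x)) else 0 := by
  unfold exponentialPDFReal gammaPDFReal
  split <;> simp [Real.Gamma_one]

lemma expMeasure_eq_withDensity (l : ℝ) :
    expMeasure l = volume.withDensity
      (fun x => ((exponentialPDFReal l x).toNNReal : ENNReal)) := by
  rfl

lemma meas_pdfNN (l : ℝ) : Measurable (fun x => (exponentialPDFReal l x).toNNReal) :=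
  (measurable_exponentialPDFReal l).real_toNNReal

lemma integral_expMeasure {l : ℝ} (hl : 0 < l) (g : ℝ → ℝ) :
    ∫ x, g x ∂(expMeasure l) = ∫ x in Ioi 0, g x * (l * Real.exp (-(l*x))) := by
  rw [expMeasure_eq_withDensity, integral_withDensity_eq_integral_smul (meas_pdfNN l)]
  have h : (fun x => (exponentialPDFReal l x).toNNReal • g x)
      = Set.indicator (Ici 0) (fun x => g x * (l * Real.exp (-(l*x)))) := by
    funext x
    rw [NNReal.smul_def, smul_eq_mul, Real.coe_toNNReal _ (exponentialPDFReal_nonneg hl x),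
      epdfReal_eq]
    by_cases hx : 0 ≤ x
    · simp [hx, indicator_of_mem (mem_Ici.2 hx), smul_eq_mul]; ring
    · simp [hx, indicator_of_notMem (fun h => hx (mem_Ici.1 h))]
  rw [h, integral_indicator measurableSet_Ici, integral_Ici_eq_integral_Ioi]

lemma integrable_expMeasure_iff {l : ℝ} (hl : 0 < l) {g : ℝ → ℝ} :
    Integrable g (expMeasure l) ↔
      IntegrableOn (fun x => g x * (l * Real.exp (-(l*x)))) (Ioi 0) := by
  rw [expMeasure_eq_withDensity]
  rw [integrable_withDensity_iff_integrable_smul (meas_pdfNN l)]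
  have h : (fun x => (exponentialPDFReal l x).toNNReal • g x)
      = Set.indicator (Ici 0) (fun x => g x * (l * Real.exp (-(l*x)))) := by
    funext x
    rw [NNReal.smul_def, smul_eq_mul, Real.coe_toNNReal _ (exponentialPDFReal_nonneg hl x),
      epdfReal_eq]
    by_cases hx : 0 ≤ x
    · simp [hx, indicator_of_mem (mem_Ici.2 hx)]; ring
    · simp [hx, indicator_of_notMem (fun h => hx (mem_Ici.1 h))]
  rw [h, integrable_indicator_iff measurableSet_Ici, integrableOn_Ici_iff_integrableOn_Ioi]

lemma tail_expMeasure {l : ℝ} (hl : 0 < l) {c : ℝ} (hc : 0 ≤ c) :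
    ∫ t in Ioi c, t ∂(expMeasure l) = (c + 1/l) * Real.exp (-(l*c)) := by
  rw [expMeasure_eq_withDensity,
    setIntegral_withDensity_eq_setIntegral_smul (meas_pdfNN l) _ measurableSet_Ioi]
  have h : ∫ t in Ioi c, (exponentialPDFReal l t).toNNReal • t
      = ∫ t in Ioi c, l * (t * Real.exp (-(l*t))) := by
    apply setIntegral_congr_fun measurableSet_Ioi
    intro t ht
    dsimp only
    rw [NNReal.smul_def, smul_eq_mul, Real.coe_toNNReal _ (exponentialPDFReal_nonneg hl t),
      epdfReal_eq, if_pos (hc.trans (le_of_lt ht))]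
    ring
  rw [h, integral_const_mul, (I1 hl hc).2]
  field_simp

lemma variance_congr' {α : Type*} {m : MeasurableSpace α} {μ : Measure α} {f g : α → ℝ}
    (h : f =ᵐ[μ] g) : variance f μ = variance g μ := by
  unfold ProbabilityTheory.variance ProbabilityTheory.evariance
  rw [integral_congr_ae h]
  congr 1
  apply lintegral_congr_ae
  filter_upwards [h] with x hx
  rw [hx]

/-- For `X` exponential with rate `λ > 0`, mean `μ = 1/λ` and distribution function
`E_λ(x) = 1 − exp(−λx)`, the asymptotic variance of the test statistic is
`(4/μ²)·Var(X·E_λ(X) + ∫_X^∞ t dE_λ(t) − (3/4)X) = 1/12`. -/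
theorem stmt7 {Ω : Type*} [MeasureSpace Ω] [IsProbabilityMeasure (ℙ : Measure Ω)]
    (X : Ω → ℝ) (hXm : Measurable X)
    (l : ℝ) (hl : 0 < l)
    (hXd : Measure.map X ℙ = expMeasure l)
    (μ : ℝ) (hμ : μ = 1 / l) :
    4 / μ ^ 2 * variance (fun ω =>
        X ω * (1 - Real.exp (-l * X ω))
          + (∫ t in Set.Ioi (X ω), t ∂(expMeasure l))
          - 3 / 4 * X ω) ℙ = 1 / 12 := by
  subst hμ
  have hlne : l ≠ 0 := ne_of_gt hl
  set h : ℝ → ℝ := fun x => x/4 + Real.exp (-(l*x))/l with hh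
  have hcont : Continuous h := by
    apply (continuous_id.div_const 4).add
    exact (Real.continuous_exp.comp (continuous_const.mul continuous_id).neg).div_const l
  -- X is a.e. nonnegative
  have hX0 : ∀ᵐ ω ∂(ℙ : Measure Ω), 0 ≤ X ω := by
    rw [ae_iff]
    have hset : {ω | ¬ 0 ≤ X ω} = X ⁻¹' (Iio 0) := by ext ω; simp [not_le]
    rw [hset, ← Measure.map_apply hXm measurableSet_Iio, hXd,
      show expMeasure l = volume.withDensity (exponentialPDF l) from rfl,
      withDensity_apply _ measurableSet_Iio]
    exact lintegral_exponentialPDF_of_nonpos le_rfl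
  -- the integrand equals h ∘ X a.e.
  have hae : (fun ω => X ω * (1 - Real.exp (-l * X ω))
          + (∫ t in Set.Ioi (X ω), t ∂(expMeasure l))
          - 3 / 4 * X ω) =ᵐ[(ℙ : Measure Ω)] fun ω => h (X ω) := by
    filter_upwards [hX0] with ω hω
    rw [tail_expMeasure hl hω, hh]
    simp only [neg_mul]
    ring
  rw [variance_congr' hae]
  have hasm : AEStronglyMeasurable h (Measure.map X ℙ) := hcont.aestronglyMeasurable
  have e2 : ∀ t : ℝ, Real.exp (-(2*l*t)) = Real.exp (-(l*t)) * Real.exp (-(l*t)) := by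
    intro t; rw [← Real.exp_add]; ring_nf
  have e3 : ∀ t : ℝ, Real.exp (-(3*l*t))
      = Real.exp (-(l*t)) * Real.exp (-(l*t)) * Real.exp (-(l*t)) := by
    intro t; rw [← Real.exp_add, ← Real.exp_add]; ring_nf
  have h2l : (0:ℝ) < 2*l := by linarith
  have h3l : (0:ℝ) < 3*l := by linarith
  -- integrability of h²
  have hsqInt : Integrable (fun x => h x ^ 2) (expMeasure l) := by
    rw [integrable_expMeasure_iff hl]
    have key : (fun x => h x ^ 2 * (l * Real.exp (-(l*x)))) =
        fun t => (l/16) * (t^2 * Real.exp (-(l*t))) + ((1/2) * (t * Real.exp (-(2*l*t)))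
          + (1/l) * Real.exp (-(3*l*t))) := by
      funext t
      rw [hh]
      simp only
      rw [e2 t, e3 t]
      field_simp
      ring
    rw [key]
    exact ((I2 hl).1.const_mul _).add (((I1 h2l le_rfl).1.const_mul _).add
      ((I0 h3l).1.const_mul _))
  have hmem : MemLp (fun ω => h (X ω)) 2 (ℙ : Measure Ω) := by
    have h1 : MemLp h 2 (Measure.map X ℙ) := by
      rw [hXd]
      exact (memLp_two_iff_integrable_sq (hXd ▸ hasm)).2 hsqInt
    exact (memLp_map_measure_iff hasm hXm.aemeasurable).1 h1
  rw [variance_eq_sub hmem]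
  have hint1 : ∫ ω, h (X ω) ∂(ℙ : Measure Ω) = 3/(4*l) := by
    rw [← integral_map hXm.aemeasurable hasm, hXd, integral_expMeasure hl]
    have key : (fun x => h x * (l * Real.exp (-(l*x)))) =
        fun t => (l/4) * (t * Real.exp (-(l*t))) + Real.exp (-(2*l*t)) := by
      funext t
      rw [hh]
      simp only
      rw [e2 t]
      field_simp
    rw [key, integral_add ((I1 hl le_rfl).1.const_mul _) (I0 h2l).1,
      integral_const_mul, (I1 hl le_rfl).2, (I0 h2l).2]
    simp
    field_simp
    ring
  have hint2 : ∫ ω, h (X ω) ^ 2 ∂(ℙ : Measure Ω) = 7/(12*l^2) := by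
    have hasm2 : AEStronglyMeasurable (fun x => h x ^ 2) (Measure.map X ℙ) :=
      (hcont.pow 2).aestronglyMeasurable
    rw [← integral_map hXm.aemeasurable hasm2, hXd, integral_expMeasure hl]
    have key : (fun x => h x ^ 2 * (l * Real.exp (-(l*x)))) =
        fun t => (l/16) * (t^2 * Real.exp (-(l*t))) + ((1/2) * (t * Real.exp (-(2*l*t)))
          + (1/l) * Real.exp (-(3*l*t))) := by
      funext t
      rw [hh]
      simp only
      rw [e2 t, e3 t]
      field_simp
      ring
    have hBC : Integrable (fun t : ℝ => 1/2 * (t * Real.exp (-(2*l*t)))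
        + 1/l * Real.exp (-(3*l*t))) (volume.restrict (Ioi 0)) :=
      ((I1 h2l le_rfl).1.const_mul _).add ((I0 h3l).1.const_mul _)
    rw [key, integral_add ((I2 hl).1.const_mul _) hBC,
      integral_add ((I1 h2l le_rfl).1.const_mul _) ((I0 h3l).1.const_mul _),
      integral_const_mul, integral_const_mul, integral_const_mul,
      (I2 hl).2, (I1 h2l le_rfl).2, (I0 h3l).2]
    simp
    field_simp
    ring
  simp only [Pi.pow_apply]
  rw [hint2, hint1]
  field_simp
  ring
end

section
/- Let X₁, X₂, ... be i.i.d. nonnegative random variables with distribution function F, finite positive mean μ_F, δ_F = E[max{X₁,X₂}]/μ_F, and E[(max{X₁,X₂} − (δ_F/2)(X₁+X₂))²] < ∞. Let G₀ be a fixed distribution with δ_{G₀} and σ_{G₀} > 0 given constants. If δ_F − δ_{G₀} < 0, then for every α ∈ (0,1), P(√n(δ̂_n − δ_{G₀})/σ_{G₀} < z_α) → 1 as n → ∞, where δ̂_n = (Σ_{i≠j} max{X_i,X_j})/(n(n−1)X̄_n) and z_α is the α-quantile of the standard normal distribution; i.e., the test is consistent. -/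
open MeasureTheory ProbabilityTheory Set Filter Topology

set_option maxHeartbeats 1600000

/-- The U-statistic estimator `δ̂_n = (Σ_{i≠j} max{X_i,X_j})/(n(n−1)X̄_n)`. -/
noncomputable def deltaHat {Ω : Type*} (X : ℕ → Ω → ℝ) (n : ℕ) (ω : Ω) : ℝ :=
  (∑ i ∈ Finset.range n, ∑ j ∈ Finset.range n, if i ≠ j then max (X i ω) (X j ω) else 0) /
    ((n : ℝ) * ((n : ℝ) - 1) * ((∑ i ∈ Finset.range n, X i ω) / n))

/-- The centered, symmetric U-statistic kernel `h(x,y) = max(x,y) − (δ_F/2)(x+y)`. -/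
noncomputable def Hker (δF : ℝ) (p : ℝ × ℝ) : ℝ := max p.1 p.2 - δF / 2 * (p.1 + p.2)

lemma Hker_measurable (δF : ℝ) : Measurable (Hker δF) :=
  (measurable_fst.max measurable_snd).sub
    ((measurable_fst.add measurable_snd).const_mul _)

/-- The centered U-statistic sum `Σ_{i≠j} h(X_i, X_j)`. -/
noncomputable def Ustat {Ω : Type*} (X : ℕ → Ω → ℝ) (δF : ℝ) (n : ℕ) (ω : Ω) : ℝ :=
  ∑ p ∈ Finset.range n ×ˢ Finset.range n,
    if p.1 ≠ p.2 then Hker δF (X p.1 ω, X p.2 ω) else 0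

section Aux

variable {Ω : Type*} [MeasureSpace Ω] [IsProbabilityMeasure (ℙ : Measure Ω)]
  (X : ℕ → Ω → ℝ) (δF : ℝ)

lemma Apm (hXm : ∀ i, Measurable (X i)) (p : ℕ × ℕ) :
    Measurable (fun ω => if p.1 ≠ p.2 then Hker δF (X p.1 ω, X p.2 ω) else 0) := by
  by_cases hp : p.1 = p.2
  · simp [hp]
  · simp only [hp, ne_eq, not_false_eq_true, if_true]
    exact (Hker_measurable δF).comp ((hXm p.1).prodMk (hXm p.2))

lemma Ustat_measurable (hXm : ∀ i, Measurable (X i)) (n : ℕ) :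
    Measurable (Ustat X δF n) :=
  Finset.measurable_sum _ fun p _ => Apm X δF hXm p

/-- Second-moment bound on the centered U-statistic:
`E[(Σ_{i≠j} h(X_i,X_j))²] ≤ 4 n³ E[h(X_0,X_1)²]`. -/
lemma Ustat_sq_bound
    (hXm : ∀ i, Measurable (X i))
    (hiid : ∀ i, Measure.map (X i) ℙ = Measure.map (X 0) ℙ)
    (hindep : iIndepFun X ℙ)
    (hsq : Integrable (fun ω => (Hker δF (X 0 ω, X 1 ω)) ^ 2) ℙ)
    (hint : Integrable (fun ω => Hker δF (X 0 ω, X 1 ω)) ℙ)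
    (hzero : (∫ ω, Hker δF (X 0 ω, X 1 ω)) = 0)
    (n : ℕ) :
    (Integrable (fun ω => (Ustat X δF n ω) ^ 2) ℙ) ∧
    (∫ ω, (Ustat X δF n ω) ^ 2) ≤ 4 * n ^ 3 * (∫ ω, (Hker δF (X 0 ω, X 1 ω)) ^ 2) := by
  classical
  set M : ℝ := ∫ ω, (Hker δF (X 0 ω, X 1 ω)) ^ 2 with hM
  have hM0 : 0 ≤ M := integral_nonneg fun ω => sq_nonneg _
  set H : ℕ → ℕ → Ω → ℝ := fun i j ω => Hker δF (X i ω, X j ω) with hHdef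
  have HMeas : ∀ i j, Measurable (H i j) := fun i j =>
    (Hker_measurable δF).comp ((hXm i).prodMk (hXm j))
  -- identical distribution of the pairs
  have hpairmap : ∀ i j : ℕ, i ≠ j →
      Measure.map (fun ω => (X i ω, X j ω)) ℙ
        = (Measure.map (X 0) ℙ).prod (Measure.map (X 0) ℙ) := by
    intro i j hij
    rw [(indepFun_iff_map_prod_eq_prod_map_map (hXm i).aemeasurable
      (hXm j).aemeasurable).1 (hindep.indepFun hij), hiid i, hiid j]
  have hHid : ∀ i j : ℕ, i ≠ j → IdentDistrib (H i j) (H 0 1) ℙ ℙ := by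
    intro i j hij
    have hp : IdentDistrib (fun ω => (X i ω, X j ω)) (fun ω => (X 0 ω, X 1 ω)) ℙ ℙ :=
      ⟨((hXm i).prodMk (hXm j)).aemeasurable, ((hXm 0).prodMk (hXm 1)).aemeasurable,
        by rw [hpairmap i j hij, hpairmap 0 1 one_ne_zero.symm]⟩
    exact hp.comp (Hker_measurable δF)
  have hHsqid : ∀ i j : ℕ, i ≠ j →
      IdentDistrib (fun ω => (H i j ω) ^ 2) (fun ω => (H 0 1 ω) ^ 2) ℙ ℙ :=
    fun i j hij => (hHid i j hij).comp (measurable_id.pow_const 2)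
  have hHsqint : ∀ i j : ℕ, i ≠ j → Integrable (fun ω => (H i j ω) ^ 2) ℙ :=
    fun i j hij => (hHsqid i j hij).integrable_iff.2 hsq
  have hHsqE : ∀ i j : ℕ, i ≠ j → (∫ ω, (H i j ω) ^ 2) = M :=
    fun i j hij => (hHsqid i j hij).integral_eq
  have hHint : ∀ i j : ℕ, i ≠ j → Integrable (H i j) ℙ :=
    fun i j hij => (hHid i j hij).integrable_iff.2 hint
  have hHE : ∀ i j : ℕ, i ≠ j → (∫ ω, H i j ω) = 0 :=
    fun i j hij => by rw [(hHid i j hij).integral_eq]; exact hzero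
  -- product facts
  have hprodInt : ∀ i j k l : ℕ, i ≠ j → k ≠ l →
      Integrable (fun ω => H i j ω * H k l ω) ℙ := by
    intro i j k l hij hkl
    refine (((hHsqint i j hij).add (hHsqint k l hkl)).div_const 2).mono'
      ((HMeas i j).mul (HMeas k l)).aestronglyMeasurable ?_
    filter_upwards with ω
    rw [Real.norm_eq_abs, abs_mul]
    simp only [Pi.add_apply]
    nlinarith [sq_nonneg (|H i j ω| - |H k l ω|), sq_abs (H i j ω), sq_abs (H k l ω),
      abs_nonneg (H i j ω), abs_nonneg (H k l ω)]
  have hprodLe : ∀ i j k l : ℕ, i ≠ j → k ≠ l →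
      (∫ ω, H i j ω * H k l ω) ≤ M := by
    intro i j k l hij hkl
    have h1 : (∫ ω, H i j ω * H k l ω)
        ≤ ∫ ω, ((H i j ω) ^ 2 + (H k l ω) ^ 2) / 2 := by
      refine integral_mono (hprodInt _ _ _ _ hij hkl)
        (((hHsqint i j hij).add (hHsqint k l hkl)).div_const 2) (fun ω => ?_)
      nlinarith [sq_nonneg (H i j ω - H k l ω)]
    rw [integral_div, integral_add (hHsqint i j hij) (hHsqint k l hkl),
      hHsqE i j hij, hHsqE k l hkl] at h1
    linarith
  have hprodZero : ∀ i j k l : ℕ, i ≠ j → k ≠ l → i ≠ k → i ≠ l → j ≠ k → j ≠ l →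
      (∫ ω, H i j ω * H k l ω) = 0 := by
    intro i j k l hij hkl hik hil hjk hjl
    have hind : IndepFun (H i j) (H k l) ℙ :=
      (hindep.indepFun_prodMk_prodMk hXm i j k l hik hil hjk hjl).comp
        (Hker_measurable δF) (Hker_measurable δF)
    have := hind.integral_fun_mul_eq_mul_integral (HMeas i j).aestronglyMeasurable
      (HMeas k l).aestronglyMeasurable
    calc (∫ ω, H i j ω * H k l ω) = (∫ ω, H i j ω) * ∫ ω, H k l ω := this
      _ = 0 := by rw [hHE i j hij, hHE k l hkl, mul_zero]
  -- the summands
  set A : ℕ × ℕ → Ω → ℝ := fun p ω => if p.1 ≠ p.2 then H p.1 p.2 ω else 0 with hAdef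
  have hAInt : ∀ p q : ℕ × ℕ, Integrable (fun ω => A p ω * A q ω) ℙ := by
    intro p q
    by_cases hp : p.1 = p.2
    · simpa [hAdef, hp] using integrable_zero Ω ℝ (ℙ : Measure Ω)
    by_cases hq : q.1 = q.2
    · simpa [hAdef, hq] using integrable_zero Ω ℝ (ℙ : Measure Ω)
    · simpa [hAdef, hp, hq] using hprodInt p.1 p.2 q.1 q.2 hp hq
  have hAle : ∀ p q : ℕ × ℕ, (∫ ω, A p ω * A q ω) ≤ M := by
    intro p q
    by_cases hp : p.1 = p.2
    · simpa [hAdef, hp] using hM0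
    by_cases hq : q.1 = q.2
    · simpa [hAdef, hq] using hM0
    · simpa [hAdef, hp, hq] using hprodLe p.1 p.2 q.1 q.2 hp hq
  have hAzero : ∀ p q : ℕ × ℕ, p.1 ≠ q.1 → p.1 ≠ q.2 → p.2 ≠ q.1 → p.2 ≠ q.2 →
      (∫ ω, A p ω * A q ω) = 0 := by
    intro p q h1 h2 h3 h4
    by_cases hp : p.1 = p.2
    · simp [hAdef, hp]
    by_cases hq : q.1 = q.2
    · simp [hAdef, hq]
    · simpa [hAdef, hp, hq] using hprodZero p.1 p.2 q.1 q.2 hp hq h1 h2 h3 h4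
  set P : Finset (ℕ × ℕ) := Finset.range n ×ˢ Finset.range n with hPdef
  have hUeq : ∀ ω, Ustat X δF n ω = ∑ p ∈ P, A p ω := fun ω => rfl
  have hsqeq : (fun ω => (Ustat X δF n ω) ^ 2)
      = fun ω => ∑ p ∈ P, ∑ q ∈ P, A p ω * A q ω := by
    funext ω
    rw [hUeq, sq, Finset.sum_mul_sum]
  have hIntU : Integrable (fun ω => (Ustat X δF n ω) ^ 2) ℙ := by
    rw [hsqeq]
    exact integrable_finset_sum _ fun p _ =>
      integrable_finset_sum _ fun q _ => hAInt p q
  refine ⟨hIntU, ?_⟩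
  have hexp : (∫ ω, (Ustat X δF n ω) ^ 2)
      = ∑ p ∈ P, ∑ q ∈ P, ∫ ω, A p ω * A q ω := by
    rw [hsqeq, integral_finset_sum _ (fun p _ =>
      integrable_finset_sum _ fun q _ => hAInt p q)]
    exact Finset.sum_congr rfl fun p _ =>
      integral_finset_sum _ fun q _ => hAInt p q
  have hinner : ∀ p ∈ P, (∑ q ∈ P, ∫ ω, A p ω * A q ω) ≤ (4 * n : ℝ) * M := by
    intro p _
    have hfilter : (∑ q ∈ P.filter
        (fun q => p.1 = q.1 ∨ p.1 = q.2 ∨ p.2 = q.1 ∨ p.2 = q.2),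
          ∫ ω, A p ω * A q ω) = ∑ q ∈ P, ∫ ω, A p ω * A q ω := by
      refine Finset.sum_filter_of_ne fun q _ hne => ?_
      by_contra hc
      push_neg at hc
      exact hne (hAzero p q hc.1 hc.2.1 hc.2.2.1 hc.2.2.2)
    rw [← hfilter]
    have hcard : (P.filter
        (fun q => p.1 = q.1 ∨ p.1 = q.2 ∨ p.2 = q.1 ∨ p.2 = q.2)).card ≤ 4 * n := by
      have hsubset : P.filter
          (fun q => p.1 = q.1 ∨ p.1 = q.2 ∨ p.2 = q.1 ∨ p.2 = q.2)
          ⊆ (({p.1} : Finset ℕ) ×ˢ Finset.range n) ∪ (({p.2} : Finset ℕ) ×ˢ Finset.range n)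
            ∪ (Finset.range n ×ˢ ({p.1} : Finset ℕ))
            ∪ (Finset.range n ×ˢ ({p.2} : Finset ℕ)) := by
        intro q hq
        simp only [hPdef, Finset.mem_filter, Finset.mem_product, Finset.mem_union,
          Finset.mem_singleton, Finset.mem_range] at hq ⊢
        tauto
      calc (P.filter _).card ≤ _ := Finset.card_le_card hsubset
        _ ≤ ((({p.1} : Finset ℕ) ×ˢ Finset.range n) ∪ (({p.2} : Finset ℕ) ×ˢ Finset.range n)
            ∪ (Finset.range n ×ˢ ({p.1} : Finset ℕ))).card
            + (Finset.range n ×ˢ ({p.2} : Finset ℕ)).card := Finset.card_union_le _ _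
        _ ≤ (((({p.1} : Finset ℕ) ×ˢ Finset.range n) ∪ (({p.2} : Finset ℕ) ×ˢ Finset.range n)).card
            + (Finset.range n ×ˢ ({p.1} : Finset ℕ)).card)
            + (Finset.range n ×ˢ ({p.2} : Finset ℕ)).card := by
              gcongr
              exact Finset.card_union_le _ _
        _ ≤ (((({p.1} : Finset ℕ) ×ˢ Finset.range n).card
            + (({p.2} : Finset ℕ) ×ˢ Finset.range n).card)
            + (Finset.range n ×ˢ ({p.1} : Finset ℕ)).card)
            + (Finset.range n ×ˢ ({p.2} : Finset ℕ)).card := by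
              gcongr
              exact Finset.card_union_le _ _
        _ ≤ 4 * n := by simp [Finset.card_product]; omega
    calc (∑ q ∈ P.filter _, ∫ ω, A p ω * A q ω)
        ≤ (P.filter (fun q => p.1 = q.1 ∨ p.1 = q.2 ∨ p.2 = q.1 ∨ p.2 = q.2)).card • M :=
          Finset.sum_le_card_nsmul _ _ _ fun q _ => hAle p q
      _ = ((P.filter _).card : ℝ) * M := nsmul_eq_mul _ _
      _ ≤ (4 * n : ℝ) * M := by
          apply mul_le_mul_of_nonneg_right _ hM0
          exact_mod_cast hcard
  calc (∫ ω, (Ustat X δF n ω) ^ 2)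
      = ∑ p ∈ P, ∑ q ∈ P, ∫ ω, A p ω * A q ω := hexp
    _ ≤ ∑ _p ∈ P, (4 * n : ℝ) * M := Finset.sum_le_sum hinner
    _ = (P.card : ℝ) * ((4 * n : ℝ) * M) := by rw [Finset.sum_const, nsmul_eq_mul]
    _ = 4 * n ^ 3 * M := by
        rw [hPdef, Finset.card_product, Finset.card_range]
        push_cast
        ring

end Aux

/-- Consistency of the test: if `δ_F − δ_{G₀} < 0`, then for every `α ∈ (0,1)`
the rejection probability `P(√n(δ̂_n − δ_{G₀})/σ_{G₀} < z_α)` tends to `1`,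
where `z_α` is the `α`-quantile of the standard normal distribution. -/
theorem stmt14 {Ω : Type*} [MeasureSpace Ω] [IsProbabilityMeasure (ℙ : Measure Ω)]
    (X : ℕ → Ω → ℝ) (hXm : ∀ i, Measurable (X i))
    (hXpos : ∀ i ω, 0 ≤ X i ω)
    (hiid : ∀ i, Measure.map (X i) ℙ = Measure.map (X 0) ℙ)
    (hindep : iIndepFun X ℙ)
    (hXint : Integrable (X 0) ℙ)
    (μF : ℝ) (hμF : μF = ∫ ω, X 0 ω) (hμFpos : 0 < μF)
    (δF : ℝ) (hδF : δF = (∫ ω, max (X 0 ω) (X 1 ω)) / μF)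
    (hmom2 : Integrable (fun ω =>
      (max (X 0 ω) (X 1 ω) - δF / 2 * (X 0 ω + X 1 ω)) ^ 2) ℙ)
    (δG0 σG0 : ℝ) (hσG0 : 0 < σG0)
    (halt : δF - δG0 < 0)
    (α : ℝ) (hα : α ∈ Set.Ioo (0 : ℝ) 1)
    (zα : ℝ) (hzα : (gaussianReal 0 1 (Set.Iic zα)).toReal = α) :
    Tendsto (fun n : ℕ =>
        (ℙ {ω | Real.sqrt n * (deltaHat X n ω - δG0) / σG0 < zα}).toReal) atTop
      (nhds 1) := by
  classical
  obtain ⟨hα0, hα1⟩ := hα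
  -- identical distribution and basic integrability facts
  have hXid : ∀ i, IdentDistrib (X i) (X 0) ℙ ℙ := fun i =>
    ⟨(hXm i).aemeasurable, (hXm 0).aemeasurable, hiid i⟩
  have hXiInt : ∀ i, Integrable (X i) ℙ := fun i => (hXid i).integrable_iff.2 hXint
  have hXiE : ∀ i, (∫ ω, X i ω) = μF := fun i => by rw [(hXid i).integral_eq, ← hμF]
  have hmaxm : Measurable fun ω => max (X 0 ω) (X 1 ω) := (hXm 0).max (hXm 1)
  have hmaxint : Integrable (fun ω => max (X 0 ω) (X 1 ω)) ℙ := by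
    refine (hXint.add (hXiInt 1)).mono' hmaxm.aestronglyMeasurable ?_
    filter_upwards with ω
    rw [Real.norm_eq_abs, abs_of_nonneg (le_trans (hXpos 0 ω) (le_max_left _ _))]
    simp only [Pi.add_apply]
    exact max_le (by linarith [hXpos 1 ω]) (by linarith [hXpos 0 ω])
  have hEmax : (∫ ω, max (X 0 ω) (X 1 ω)) = δF * μF := by
    rw [hδF]; field_simp
  have hH01eq : (fun ω => Hker δF (X 0 ω, X 1 ω)) =
      fun ω => max (X 0 ω) (X 1 ω) - δF / 2 * (X 0 ω + X 1 ω) := rfl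
  have haddint : Integrable (fun ω => X 0 ω + X 1 ω) ℙ := hXint.add (hXiInt 1)
  have hmulint : Integrable (fun ω => δF / 2 * (X 0 ω + X 1 ω)) ℙ :=
    haddint.const_mul (δF / 2)
  have hH01int : Integrable (fun ω => Hker δF (X 0 ω, X 1 ω)) ℙ := by
    rw [hH01eq]
    exact hmaxint.sub hmulint
  have hH01sq : Integrable (fun ω => (Hker δF (X 0 ω, X 1 ω)) ^ 2) ℙ := hmom2
  have hEH01 : (∫ ω, Hker δF (X 0 ω, X 1 ω)) = 0 := by
    have e : (∫ ω, max (X 0 ω) (X 1 ω) - δF / 2 * (X 0 ω + X 1 ω))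
        = (∫ ω, max (X 0 ω) (X 1 ω)) - δF / 2 * ((∫ ω, X 0 ω) + ∫ ω, X 1 ω) := by
      rw [integral_sub hmaxint hmulint, integral_const_mul,
        integral_add hXint (hXiInt 1)]
    calc (∫ ω, Hker δF (X 0 ω, X 1 ω))
        = ∫ ω, max (X 0 ω) (X 1 ω) - δF / 2 * (X 0 ω + X 1 ω) := by rw [hH01eq]
      _ = 0 := by rw [e, hEmax, hXiE 0, hXiE 1]; ring
  set M : ℝ := ∫ ω, (Hker δF (X 0 ω, X 1 ω)) ^ 2 with hMdef
  have hM0 : 0 ≤ M := integral_nonneg fun ω => sq_nonneg _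
  have hUB := fun n => Ustat_sq_bound X δF hXm hiid hindep hH01sq hH01int hEH01 n
  -- constants
  set ε : ℝ := (δG0 - δF) / 2 with hεdef
  have hε : 0 < ε := by rw [hεdef]; linarith
  set c : ℝ := ε * μF / 2 with hcdef
  have hc : 0 < c := by rw [hcdef]; positivity
  -- the bad events
  set E1 : ℕ → Set Ω := fun n => {ω | (∑ i ∈ Finset.range n, X i ω) / n ≤ μF / 2}
    with hE1def
  set E2 : ℕ → Set Ω :=
    fun n => {ω | c ≤ |Ustat X δF n ω| / ((n : ℝ) * ((n : ℝ) - 1))} with hE2def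
  have hE1m : ∀ n, MeasurableSet (E1 n) := fun n =>
    measurableSet_le ((Finset.measurable_sum _ fun i _ => hXm i).div_const _)
      measurable_const
  have hE2m : ∀ n, MeasurableSet (E2 n) := fun n =>
    measurableSet_le measurable_const
      (((Ustat_measurable X δF hXm n).abs).div_const _)
  -- strong law of large numbers for the denominator
  have hSLLN := strong_law_ae_real X hXint (fun i j hij => hindep.indepFun hij) hXid
  have hTIM : TendstoInMeasure ℙ
      (fun (n : ℕ) ω => (∑ i ∈ Finset.range n, X i ω) / n) atTop (fun _ => μF) := by
    refine tendstoInMeasure_of_tendsto_ae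
      (fun n => ((Finset.measurable_sum _ fun i _ => hXm i).div_const _).aestronglyMeasurable) ?_
    filter_upwards [hSLLN] with ω hω
    simpa [hμF] using hω
  have hE1t : Tendsto (fun n => ℙ (E1 n)) atTop (𝓝 0) := by
    have h2 := hTIM (ENNReal.ofReal (μF / 2)) (ENNReal.ofReal_pos.2 (by positivity))
    refine tendsto_of_tendsto_of_tendsto_of_le_of_le tendsto_const_nhds h2
      (fun n => zero_le) (fun n => measure_mono ?_)
    intro ω hω
    have hω' : (∑ i ∈ Finset.range n, X i ω) / n ≤ μF / 2 := hω
    simp only [mem_setOf_eq]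
    rw [edist_dist]
    apply ENNReal.ofReal_le_ofReal
    rw [Real.dist_eq, abs_of_nonpos (by linarith)]
    linarith
  have hE1r : Tendsto (fun n => (ℙ (E1 n)).toReal) atTop (𝓝 0) := by
    have := (ENNReal.tendsto_toReal (a := 0) (by simp)).comp hE1t
    simpa [Function.comp_def] using this
  -- Chebyshev bound for the U-statistic part
  have hbound : ∀ n : ℕ, 2 ≤ n → (ℙ (E2 n)).toReal ≤ (16 * M / c ^ 2) / n := by
    intro n hn
    have hn2 : (2 : ℝ) ≤ (n : ℝ) := by exact_mod_cast hn
    have hnpos : (0 : ℝ) < n := by linarith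
    have hn1 : (1 : ℝ) ≤ (n : ℝ) - 1 := by linarith
    have hnn : (0 : ℝ) < (n : ℝ) * ((n : ℝ) - 1) := by nlinarith
    have hU := hUB n
    have markov := mul_meas_ge_le_integral_of_nonneg (μ := ℙ)
      (Eventually.of_forall fun ω => sq_nonneg (Ustat X δF n ω)) hU.1
      ((c * ((n : ℝ) * ((n : ℝ) - 1))) ^ 2)
    have hsubset : E2 n ⊆
        {ω | (c * ((n : ℝ) * ((n : ℝ) - 1))) ^ 2 ≤ (Ustat X δF n ω) ^ 2} := by
      intro ω hω
      have hω' : c ≤ |Ustat X δF n ω| / ((n : ℝ) * ((n : ℝ) - 1)) := hω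
      simp only [mem_setOf_eq]
      rw [le_div_iff₀ hnn] at hω'
      calc (c * ((n : ℝ) * ((n : ℝ) - 1))) ^ 2 ≤ |Ustat X δF n ω| ^ 2 := by
            apply pow_le_pow_left₀ (by positivity) (by linarith)
        _ = (Ustat X δF n ω) ^ 2 := sq_abs _
    have hpos2 : (0 : ℝ) < (c * ((n : ℝ) * ((n : ℝ) - 1))) ^ 2 := by positivity
    have h1 : (ℙ (E2 n)).toReal
        ≤ (ℙ {ω | (c * ((n : ℝ) * ((n : ℝ) - 1))) ^ 2 ≤ (Ustat X δF n ω) ^ 2}).toReal :=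
      ENNReal.toReal_mono (measure_ne_top _ _) (measure_mono hsubset)
    have h2 : (ℙ {ω | (c * ((n : ℝ) * ((n : ℝ) - 1))) ^ 2 ≤ (Ustat X δF n ω) ^ 2}).toReal
        ≤ (4 * n ^ 3 * M) / (c * ((n : ℝ) * ((n : ℝ) - 1))) ^ 2 := by
      rw [le_div_iff₀ hpos2]
      calc _ = (c * ((n : ℝ) * ((n : ℝ) - 1))) ^ 2
            * (ℙ {ω | (c * ((n : ℝ) * ((n : ℝ) - 1))) ^ 2 ≤ (Ustat X δF n ω) ^ 2}).toReal := by
            ring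
        _ ≤ ∫ ω, (Ustat X δF n ω) ^ 2 := markov
        _ ≤ 4 * n ^ 3 * M := hU.2
    have h3 : (4 * (n : ℝ) ^ 3 * M) / (c * ((n : ℝ) * ((n : ℝ) - 1))) ^ 2
        ≤ (16 * M / c ^ 2) / n := by
      rw [div_le_div_iff₀ hpos2 hnpos]
      have e3 : 16 * M / c ^ 2 * (c * ((n : ℝ) * ((n : ℝ) - 1))) ^ 2
          = 16 * M * ((n : ℝ) * ((n : ℝ) - 1)) ^ 2 := by
        field_simp
      rw [e3]
      nlinarith [mul_nonneg (mul_nonneg hM0 (sq_nonneg (n : ℝ)))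
        (mul_nonneg (by linarith : (0:ℝ) ≤ 3 * (n:ℝ) - 2)
          (by linarith : (0:ℝ) ≤ (n:ℝ) - 2))]
    exact le_trans h1 (le_trans h2 h3)
  have hE2r : Tendsto (fun n => (ℙ (E2 n)).toReal) atTop (𝓝 0) :=
    tendsto_of_tendsto_of_tendsto_of_le_of_le' tendsto_const_nhds
      (tendsto_const_div_atTop_nhds_zero_nat (16 * M / c ^ 2))
      (Eventually.of_forall fun n => ENNReal.toReal_nonneg)
      (eventually_atTop.2 ⟨2, hbound⟩)
  -- the algebraic decomposition of the numerator
  have hdecomp : ∀ (n : ℕ) (ω : Ω),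
      (∑ i ∈ Finset.range n, ∑ j ∈ Finset.range n,
          if i ≠ j then max (X i ω) (X j ω) else 0)
        = Ustat X δF n ω + δF * ((n : ℝ) - 1) * (∑ i ∈ Finset.range n, X i ω) := by
    intro n ω
    have e1 : ∀ i j : ℕ,
        (if i ≠ j then max (X i ω) (X j ω) else 0)
          = (if i ≠ j then Hker δF (X i ω, X j ω) else 0)
            + δF / 2 * (if i ≠ j then X i ω + X j ω else 0) := by
      intro i j
      by_cases hij : i = j <;> simp [Hker, hij] <;> ring
    have e2 : ∀ i j : ℕ, (if i ≠ j then X i ω + X j ω else 0)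
        = (X i ω + X j ω) - (if i = j then X i ω + X j ω else 0) := by
      intro i j; by_cases hij : i = j <;> simp [hij]
    have eU : Ustat X δF n ω
        = ∑ i ∈ Finset.range n, ∑ j ∈ Finset.range n,
            (if i ≠ j then Hker δF (X i ω, X j ω) else 0) := by
      rw [Ustat, Finset.sum_product]
    have eT : (∑ i ∈ Finset.range n, ∑ j ∈ Finset.range n,
        (if i ≠ j then X i ω + X j ω else 0))
          = 2 * ((n : ℝ) - 1) * (∑ i ∈ Finset.range n, X i ω) := by
      have inner : ∀ i ∈ Finset.range n,
          (∑ j ∈ Finset.range n, (if i ≠ j then X i ω + X j ω else 0))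
            = (n : ℝ) * X i ω + (∑ j ∈ Finset.range n, X j ω) - 2 * X i ω := by
        intro i hi
        simp only [e2]
        rw [Finset.sum_sub_distrib, Finset.sum_add_distrib, Finset.sum_const,
          Finset.card_range, Finset.sum_ite_eq, if_pos hi, nsmul_eq_mul]
        ring
      rw [Finset.sum_congr rfl inner, Finset.sum_sub_distrib, Finset.sum_add_distrib,
        ← Finset.mul_sum, Finset.sum_const, Finset.card_range, ← Finset.mul_sum,
        nsmul_eq_mul]
      ring
    calc (∑ i ∈ Finset.range n, ∑ j ∈ Finset.range n,
          if i ≠ j then max (X i ω) (X j ω) else 0)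
        = ∑ i ∈ Finset.range n, ∑ j ∈ Finset.range n,
            ((if i ≠ j then Hker δF (X i ω, X j ω) else 0)
              + δF / 2 * (if i ≠ j then X i ω + X j ω else 0)) :=
          Finset.sum_congr rfl fun i _ => Finset.sum_congr rfl fun j _ => e1 i j
      _ = (∑ i ∈ Finset.range n, ∑ j ∈ Finset.range n,
            (if i ≠ j then Hker δF (X i ω, X j ω) else 0))
          + δF / 2 * (∑ i ∈ Finset.range n, ∑ j ∈ Finset.range n,
            (if i ≠ j then X i ω + X j ω else 0)) := by
          simp only [Finset.sum_add_distrib, ← Finset.mul_sum]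
      _ = Ustat X δF n ω
          + δF / 2 * (2 * ((n : ℝ) - 1) * (∑ i ∈ Finset.range n, X i ω)) := by
          rw [← eU, eT]
      _ = Ustat X δF n ω + δF * ((n : ℝ) - 1) * (∑ i ∈ Finset.range n, X i ω) := by
          ring
  -- measurability of the rejection region
  have hdhm : ∀ n : ℕ, Measurable (deltaHat X n) := by
    intro n
    apply Measurable.div
    · apply Finset.measurable_sum; intro i _
      apply Finset.measurable_sum; intro j _
      by_cases hij : i = j
      · simp only [hij, ne_eq, not_true_eq_false, if_false]
        exact measurable_const
      · simpa [hij] using (hXm i).max (hXm j)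
    · exact ((Finset.measurable_sum _ fun i _ => hXm i).div_const _).const_mul _
  have hBm : ∀ n : ℕ,
      MeasurableSet {ω | Real.sqrt n * (deltaHat X n ω - δG0) / σG0 < zα} :=
    fun n => measurableSet_lt
      ((measurable_const.mul ((hdhm n).sub measurable_const)).div_const _)
      measurable_const
  -- the eventual key inequality
  have hev : ∀ᶠ n : ℕ in atTop, 2 ≤ n ∧ -(σG0 * zα) ≤ Real.sqrt n * ε := by
    rw [eventually_atTop]
    refine ⟨max 2 ⌈(-(σG0 * zα) / ε) ^ 2⌉₊, fun n hn => ?_⟩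
    have hn2 : 2 ≤ n := le_trans (le_max_left _ _) hn
    refine ⟨hn2, ?_⟩
    have hK : ((-(σG0 * zα) / ε) ^ 2 : ℝ) ≤ (n : ℝ) := by
      calc ((-(σG0 * zα) / ε) ^ 2 : ℝ) ≤ (⌈(-(σG0 * zα) / ε) ^ 2⌉₊ : ℝ) := Nat.le_ceil _
        _ ≤ (n : ℝ) := by exact_mod_cast le_trans (le_max_right _ _) hn
    have hsq : -(σG0 * zα) / ε ≤ Real.sqrt n := by
      calc -(σG0 * zα) / ε ≤ |(-(σG0 * zα) / ε)| := le_abs_self _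
        _ = Real.sqrt ((-(σG0 * zα) / ε) ^ 2) := (Real.sqrt_sq_eq_abs _).symm
        _ ≤ Real.sqrt n := Real.sqrt_le_sqrt hK
    calc -(σG0 * zα) = (-(σG0 * zα) / ε) * ε := by field_simp
      _ ≤ Real.sqrt n * ε := mul_le_mul_of_nonneg_right hsq hε.le
  have hkey : ∀ᶠ n : ℕ in atTop,
      1 - ((ℙ (E1 n)).toReal + (ℙ (E2 n)).toReal)
        ≤ (ℙ {ω | Real.sqrt n * (deltaHat X n ω - δG0) / σG0 < zα}).toReal := by
    filter_upwards [hev] with n hn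
    obtain ⟨hn2, hnz⟩ := hn
    have hn2r : (2 : ℝ) ≤ (n : ℝ) := by exact_mod_cast hn2
    have hnpos : (0 : ℝ) < n := by linarith
    have hn1 : (0 : ℝ) < (n : ℝ) - 1 := by linarith
    have hsub : (E1 n ∪ E2 n)ᶜ ⊆
        {ω | Real.sqrt n * (deltaHat X n ω - δG0) / σG0 < zα} := by
      intro ω hω
      simp only [mem_compl_iff, mem_union, not_or] at hω
      obtain ⟨h1, h2⟩ := hω
      have h1' : ¬((∑ i ∈ Finset.range n, X i ω) / n ≤ μF / 2) := h1
      have h2' : ¬(c ≤ |Ustat X δF n ω| / ((n : ℝ) * ((n : ℝ) - 1))) := h2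
      push_neg at h1' h2'
      have hnn : (0 : ℝ) < (n : ℝ) * ((n : ℝ) - 1) := by nlinarith
      have hseq : μF / 2 * (n : ℝ) < ∑ i ∈ Finset.range n, X i ω := by
        rwa [← lt_div_iff₀ hnpos]
      have hspos : 0 < ∑ i ∈ Finset.range n, X i ω := by nlinarith
      have hds : 0 < ((n : ℝ) - 1) * (∑ i ∈ Finset.range n, X i ω) :=
        mul_pos hn1 hspos
      have hdh : deltaHat X n ω
          = δF + Ustat X δF n ω / (((n : ℝ) - 1) * (∑ i ∈ Finset.range n, X i ω)) := by
        rw [deltaHat, hdecomp n ω,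
          show (n : ℝ) * ((n : ℝ) - 1) * ((∑ i ∈ Finset.range n, X i ω) / n)
            = ((n : ℝ) - 1) * (∑ i ∈ Finset.range n, X i ω) from by
              field_simp]
        rw [add_div, mul_assoc, mul_div_assoc, div_self hds.ne', mul_one, add_comm]
      have hU1 : |Ustat X δF n ω| < c * ((n : ℝ) * ((n : ℝ) - 1)) := by
        rw [div_lt_iff₀ hnn] at h2'
        linarith
      have hUb : |Ustat X δF n ω / (((n : ℝ) - 1) * (∑ i ∈ Finset.range n, X i ω))|
          < ε := by
        rw [abs_div, abs_of_pos hds, div_lt_iff₀ hds]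
        have h5 : ε * ((n : ℝ) - 1) * (μF / 2 * (n : ℝ))
            ≤ ε * ((n : ℝ) - 1) * (∑ i ∈ Finset.range n, X i ω) :=
          mul_le_mul_of_nonneg_left hseq.le (by positivity)
        calc |Ustat X δF n ω| < c * ((n : ℝ) * ((n : ℝ) - 1)) := hU1
          _ = ε * ((n : ℝ) - 1) * (μF / 2 * (n : ℝ)) := by rw [hcdef]; ring
          _ ≤ ε * ((n : ℝ) - 1) * (∑ i ∈ Finset.range n, X i ω) := h5
          _ = ε * (((n : ℝ) - 1) * (∑ i ∈ Finset.range n, X i ω)) := by ring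
      have hlt : deltaHat X n ω - δG0 < -ε := by
        have hub2 := (abs_lt.1 hUb).2
        have hG : δG0 = δF + 2 * ε := by rw [hεdef]; ring
        rw [hdh]
        linarith
      simp only [mem_setOf_eq]
      rw [div_lt_iff₀ hσG0]
      have hsqpos : 0 < Real.sqrt n := Real.sqrt_pos.2 hnpos
      have hml := mul_lt_mul_of_pos_left hlt hsqpos
      rw [mul_neg] at hml
      linarith [mul_comm zα σG0, hnz]
    have hcup : MeasurableSet (E1 n ∪ E2 n) := (hE1m n).union (hE2m n)
    have hcompl : (ℙ ((E1 n ∪ E2 n)ᶜ)).toReal = 1 - (ℙ (E1 n ∪ E2 n)).toReal := by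
      rw [prob_compl_eq_one_sub hcup,
        ENNReal.toReal_sub_of_le prob_le_one ENNReal.one_ne_top, ENNReal.toReal_one]
    have hun : (ℙ (E1 n ∪ E2 n)).toReal ≤ (ℙ (E1 n)).toReal + (ℙ (E2 n)).toReal := by
      have h6 := measure_union_le (μ := (ℙ : Measure Ω)) (E1 n) (E2 n)
      have h7 := ENNReal.toReal_mono
        (ENNReal.add_ne_top.2 ⟨measure_ne_top _ _, measure_ne_top _ _⟩) h6
      rwa [ENNReal.toReal_add (measure_ne_top _ _) (measure_ne_top _ _)] at h7
    have h8 : (ℙ ((E1 n ∪ E2 n)ᶜ)).toReal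
        ≤ (ℙ {ω | Real.sqrt n * (deltaHat X n ω - δG0) / σG0 < zα}).toReal :=
      ENNReal.toReal_mono (measure_ne_top _ _) (measure_mono hsub)
    linarith
  have hlow : Tendsto (fun n => 1 - ((ℙ (E1 n)).toReal + (ℙ (E2 n)).toReal))
      atTop (𝓝 1) := by
    have := (tendsto_const_nhds (x := (1 : ℝ)) (f := atTop)).sub (hE1r.add hE2r)
    simpa using this
  have hupper : ∀ n : ℕ,
      (ℙ {ω | Real.sqrt n * (deltaHat X n ω - δG0) / σG0 < zα}).toReal ≤ 1 := by
    intro n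
    simpa using ENNReal.toReal_mono ENNReal.one_ne_top
      (prob_le_one (μ := (ℙ : Measure Ω))
        (s := {ω | Real.sqrt n * (deltaHat X n ω - δG0) / σG0 < zα}))
  exact tendsto_of_tendsto_of_tendsto_of_le_of_le' hlow tendsto_const_nhds hkey
    (Eventually.of_forall hupper)
end

section
/- For the Weibull family with δ_θ = 2 − 2^{−1/θ} (θ ≥ 1), the derivative of θ ↦ δ_θ at θ = 1 equals −(log 2)/2; consequently, the Pitman asymptotic efficiency of the test based on δ̂ against Weibull alternatives, PAE = (dδ_θ/dθ|_{θ=1})² / σ²_{E_λ} with σ²_{E_λ} = 1/12, equals 12·((log 2)/2)² = 3(log 2)² ≈ 1.4414. -/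
/-- For the Weibull family `δ_θ = 2 − 2^{−1/θ}` (`θ ≥ 1`), the derivative at `θ = 1`
is `−(log 2)/2`; hence the Pitman asymptotic efficiency
`PAE = (dδ_θ/dθ|_{θ=1})²/σ²_{E_λ}` with `σ²_{E_λ} = 1/12` equals
`12·((log 2)/2)² = 3(log 2)²`. -/
theorem stmt16 :
    deriv (fun θ : ℝ => 2 - (2 : ℝ) ^ (-1 / θ)) 1 = -(Real.log 2) / 2 ∧
      (deriv (fun θ : ℝ => 2 - (2 : ℝ) ^ (-1 / θ)) 1) ^ 2 / (1 / 12)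
        = 12 * ((Real.log 2) / 2) ^ 2 ∧
      (12 : ℝ) * ((Real.log 2) / 2) ^ 2 = 3 * (Real.log 2) ^ 2 := by
  have hg : HasDerivAt (fun θ : ℝ => -1 / θ) 1 1 := by
    have := (hasDerivAt_inv (one_ne_zero : (1:ℝ) ≠ 0)).fun_neg
    simpa [neg_div, div_eq_mul_inv] using this
  have h1 : HasDerivAt (fun θ : ℝ => (2 : ℝ) ^ (-1 / θ))
      ((2 : ℝ) ^ (-1 / (1:ℝ)) * Real.log 2 * 1) 1 :=
    (Real.hasStrictDerivAt_const_rpow (by norm_num : (0:ℝ) < 2)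
      (-1 / (1:ℝ))).hasDerivAt.comp 1 hg
  have h2 : HasDerivAt (fun θ : ℝ => 2 - (2 : ℝ) ^ (-1 / θ))
      (-(Real.log 2) / 2) 1 := by
    have := (hasDerivAt_const (1:ℝ) (2:ℝ)).fun_sub h1
    refine this.congr_deriv ?_
    norm_num [Real.rpow_neg, Real.rpow_one]
    ring
  refine ⟨h2.deriv, ?_, by ring⟩
  rw [h2.deriv]; ring
end
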